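/- arXiv:1209.5851 — 2 statements merged into one kernel-verified Lean document; each statement's English description precedes it below -/
import Mathlib

section
/- Let R be a relation on a type of programs and let depth : step → ℕ assign a depth to each reduction step. Suppose the swapping property holds: whenever P →_i P₁ →_j P₂ with i > j, there exists P' with P →_j P' →_i P₂. Then for any reduction sequence P₁ →* P_n there exists a reduction sequence P₁ →* P_n of the same length whose step depths are non-decreasing. -/
section Aux

variable {α : Type*} (Step : ℕ → α → α → Prop)

/-- `Chain a l b`: a reduction sequence from `a` to `b` with step depths `l`. -/
def SFChain : α → List ℕ → α → Prop
  | a, [], b => a = b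
  | a, d :: l, b => ∃ c, Step d a c ∧ SFChain c l b

theorem sfchain_append {a b c : α} {l : List ℕ} {d : ℕ}
    (h : SFChain Step a l b) (hd : Step d b c) : SFChain Step a (l ++ [d]) c := by
  induction l generalizing a with
  | nil => exact ⟨c, h ▸ hd, rfl⟩
  | cons e l ih =>
    obtain ⟨a', he, hl⟩ := h
    exact ⟨a', he, ih hl⟩

theorem fun_to_chain (s : ℕ → α) (dep : ℕ → ℕ) :
    ∀ n, (∀ m < n, Step (dep m) (s m) (s (m + 1))) →
      ∃ l : List ℕ, l.length = n ∧ SFChain Step (s 0) l (s n) := by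
  intro n
  induction n with
  | zero => exact fun _ => ⟨[], rfl, rfl⟩
  | succ n ih =>
    intro h
    obtain ⟨l, hlen, hc⟩ := ih (fun m hm => h m (Nat.lt_succ_of_lt hm))
    exact ⟨l ++ [dep n], by simp [hlen],
      sfchain_append Step hc (h n (Nat.lt_succ_self n))⟩

theorem chain_to_fun {a b : α} :
    ∀ (l : List ℕ), SFChain Step a l b →
      ∃ s' : ℕ → α, s' 0 = a ∧ s' l.length = b ∧
        ∀ m < l.length, Step (l.getD m 0) (s' m) (s' (m + 1)) := by
  intro l
  induction l generalizing a with
  | nil => exact fun h => ⟨fun _ => a, rfl, h, fun m hm => absurd hm (by simp)⟩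
  | cons d l ih =>
    rintro ⟨c, hd, hc⟩
    obtain ⟨s', h0, hn, hs⟩ := ih hc
    refine ⟨fun m => if m = 0 then a else s' (m - 1), rfl, by simp [hn], ?_⟩
    intro m hm
    cases m with
    | zero => simpa [h0] using hd
    | succ m =>
      simpa using hs m (by simpa using hm)

theorem sf_insert
    (hswap : ∀ i j P P₁ P₂, j < i → Step i P P₁ → Step j P₁ P₂ →
      ∃ P', Step j P P' ∧ Step i P' P₂)
    {a b c : α} {d : ℕ} :
    ∀ (l : List ℕ), Step d a b → SFChain Step b l c → l.Pairwise (· ≤ ·) →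
      ∃ l', l'.Perm (d :: l) ∧ l'.Pairwise (· ≤ ·) ∧ SFChain Step a l' c := by
  intro l
  induction l generalizing a b with
  | nil =>
    intro hd hc _
    exact ⟨[d], List.Perm.refl _, List.pairwise_singleton _ d, b, hd, hc⟩
  | cons e l ih =>
    intro hd hc hsort
    rcases le_or_gt d e with hde | hed
    · refine ⟨d :: e :: l, List.Perm.refl _, List.pairwise_cons.mpr ⟨?_, hsort⟩, b, hd, hc⟩
      intro x hx
      rcases List.mem_cons.mp hx with rfl | hx'
      · exact hde
      · exact hde.trans (List.rel_of_pairwise_cons hsort hx')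
    · obtain ⟨b', he, hc'⟩ := hc
      obtain ⟨a', he', hd'⟩ := hswap d e a b b' hed hd he
      obtain ⟨l', hperm, hsort', hchain⟩ := ih hd' hc' hsort.of_cons
      refine ⟨e :: l', ?_, List.pairwise_cons.mpr ⟨?_, hsort'⟩, a', he', hchain⟩
      · exact (hperm.cons e).trans (List.Perm.swap d e l)
      · intro x hx
        have hx' : x ∈ d :: l := hperm.mem_iff.mp hx
        rcases List.mem_cons.mp hx' with rfl | hx''
        · exact hed.le
        · exact List.rel_of_pairwise_cons hsort hx''

theorem sf_sort
    (hswap : ∀ i j P P₁ P₂, j < i → Step i P P₁ → Step j P₁ P₂ →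
      ∃ P', Step j P P' ∧ Step i P' P₂)
    {a c : α} :
    ∀ (l : List ℕ), SFChain Step a l c →
      ∃ l', l'.length = l.length ∧ l'.Pairwise (· ≤ ·) ∧ SFChain Step a l' c := by
  intro l
  induction l generalizing a with
  | nil => exact fun h => ⟨[], rfl, List.Pairwise.nil, h⟩
  | cons d l ih =>
    rintro ⟨b, hd, hc⟩
    obtain ⟨l₂, hlen, hsort, hchain⟩ := ih hc
    obtain ⟨l', hperm, hsort', hchain'⟩ := sf_insert Step hswap l₂ hd hchain hsort
    exact ⟨l', by simp [hperm.length_eq, hlen], hsort', hchain'⟩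

end Aux

/-- Abstract simulation by shallow-first: if adjacent out-of-order steps can be
swapped, any reduction sequence can be reordered into one of the same length,
with the same endpoints, whose step depths are non-decreasing. -/
theorem simulation_by_shallow_first {α : Type*} (Step : ℕ → α → α → Prop)
    (hswap : ∀ i j P P₁ P₂, j < i → Step i P P₁ → Step j P₁ P₂ →
      ∃ P', Step j P P' ∧ Step i P' P₂)
    (n : ℕ) (s : ℕ → α) (dep : ℕ → ℕ)
    (h : ∀ m < n, Step (dep m) (s m) (s (m + 1))) :
    ∃ (s' : ℕ → α) (dep' : ℕ → ℕ),
      s' 0 = s 0 ∧ s' n = s n ∧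
      (∀ m < n, Step (dep' m) (s' m) (s' (m + 1))) ∧
      (∀ m m', m ≤ m' → m' < n → dep' m ≤ dep' m') := by
  obtain ⟨l, hlen, hc⟩ := fun_to_chain Step s dep n h
  obtain ⟨l', hlen', hsort, hchain⟩ := sf_sort Step hswap l hc
  have hlen'' : l'.length = n := hlen' ▸ hlen
  obtain ⟨s', h0, hn, hs⟩ := chain_to_fun Step l' hchain
  refine ⟨s', fun m => l'.getD m 0, h0, hlen'' ▸ hn, fun m hm => hs m (hlen'' ▸ hm), ?_⟩
  intro m m' hmm hm'
  rcases eq_or_lt_of_le hmm with rfl | hlt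
  · exact le_refl _
  · have hm'l : m' < l'.length := hlen'' ▸ hm'
    have hml : m < l'.length := lt_trans hlt hm'l
    show l'.getD m 0 ≤ l'.getD m' 0
    rw [List.getD_eq_getElem l' 0 hml, List.getD_eq_getElem l' 0 hm'l]
    exact List.pairwise_iff_getElem.mp hsort m m' hml hm'l hlt
end

section
/- In the pure lambda calculus, define Z = λx. let !x = x in !(x x), interpreting 'let !x = N in M' with the reduction (let !x = !N in M) → M[N/x]. Then the term Z(Z(...(Z !y)...)) with n occurrences of Z reduces to !(y y ⋯ y) with 2^n occurrences of y; in particular the size of the normal form is exponential in n. -/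
set_option maxHeartbeats 1000000

/-- Terms of the modal λ-calculus with multithreading and regions. -/
inductive Tm : Type
  | var : ℕ → Tm
  | reg : ℕ → Tm
  | unit : Tm
  | lam : ℕ → Tm → Tm
  | app : Tm → Tm → Tm
  | bang : Tm → Tm
  | para : Tm → Tm
  | letB : ℕ → Tm → Tm → Tm
  | letP : ℕ → Tm → Tm → Tm
  | get : ℕ → Tm
  | setr : ℕ → Tm → Tm
  | store : ℕ → Tm → Tm
  | par : Tm → Tm → Tm
  deriving DecidableEq

namespace Tm

/-- Substitution of `N` for the free occurrences of variable `x`. -/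
def subst (N : Tm) (x : ℕ) : Tm → Tm
  | var y => if y = x then N else var y
  | reg r => reg r
  | unit => unit
  | lam y M => if y = x then lam y M else lam y (subst N x M)
  | app M M' => app (subst N x M) (subst N x M')
  | bang M => bang (subst N x M)
  | para M => para (subst N x M)
  | letB y M M' => letB y (subst N x M) (if y = x then M' else subst N x M')
  | letP y M M' => letP y (subst N x M) (if y = x then M' else subst N x M')
  | get r => get r
  | setr r M => setr r (subst N x M)
  | store r M => store r (subst N x M)
  | par M M' => par (subst N x M) (subst N x M')

/-- Number of free occurrences of variable `x`. -/
def fo (x : ℕ) : Tm → ℕ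
  | var y => if y = x then 1 else 0
  | reg _ => 0
  | unit => 0
  | lam y M => if y = x then 0 else fo x M
  | app M N => fo x M + fo x N
  | bang M => fo x M
  | para M => fo x M
  | letB y M N => fo x M + (if y = x then 0 else fo x N)
  | letP y M N => fo x M + (if y = x then 0 else fo x N)
  | get _ => 0
  | setr _ M => fo x M
  | store _ M => fo x M
  | par M N => fo x M + fo x N

/-- Total number of free variable occurrences. -/
def foa : Tm → ℕ
  | var _ => 1
  | reg _ => 0
  | unit => 0
  | lam y M => foa M - fo y M
  | app M N => foa M + foa N
  | bang M => foa M
  | para M => foa M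
  | letB y M N => foa M + (foa N - fo y N)
  | letP y M N => foa M + (foa N - fo y N)
  | get _ => 0
  | setr _ M => foa M
  | store _ M => foa M
  | par M N => foa M + foa N

def closed (M : Tm) : Prop := ∀ x, fo x M = 0

/-- Region contexts: each region is assigned a depth. -/
abbrev RCtx := ℕ → ℕ

/-- Revised depth of a program: number of modal (`!`/`§`) labels above an
occurrence, plus `R r` for occurrences under a store `r ⇐ ·`. -/
def depth (R : RCtx) : Tm → ℕ
  | var _ => 0
  | reg _ => 0
  | unit => 0
  | lam _ M => depth R M
  | app M N => max (depth R M) (depth R N)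
  | bang M => depth R M + 1
  | para M => depth R M + 1
  | letB _ M N => max (depth R M) (depth R N)
  | letP _ M N => max (depth R M) (depth R N)
  | get _ => 0
  | setr _ M => depth R M
  | store r M => R r + depth R M
  | par M N => max (depth R M) (depth R N)

/-- Size (number of occurrences), with the convention that `∥` and `r⇐`
nodes do not count and `set(r)` counts for two occurrences. -/
def sizeM : Tm → ℕ
  | var _ => 1
  | reg _ => 1
  | unit => 1
  | lam _ M => sizeM M + 1
  | app M N => sizeM M + sizeM N + 1
  | bang M => sizeM M + 1
  | para M => sizeM M + 1
  | letB _ M N => sizeM M + sizeM N + 1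
  | letP _ M N => sizeM M + sizeM N + 1
  | get _ => 1
  | setr _ M => sizeM M + 2
  | store _ M => sizeM M
  | par M N => sizeM M + sizeM N

end Tm

/-- Usages of variables in the polynomial depth system. -/
inductive Usage : Type
  | ulam | upara | ubang
  deriving DecidableEq

/-- Variable contexts of the depth system. -/
abbrev VCtx := ℕ → Option Usage

open Tm in
/-- The polynomial depth system : `WF R Γ δ P` is the judgement `R; Γ ⊢^δ P`. -/
inductive WF : Tm.RCtx → VCtx → ℕ → Tm → Prop
  | var {R : Tm.RCtx} {Γ : VCtx} {δ x} : Γ x = some .ulam → WF R Γ δ (.var x)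
  | reg {R : Tm.RCtx} {Γ : VCtx} {δ r} : WF R Γ δ (.reg r)
  | unit {R : Tm.RCtx} {Γ : VCtx} {δ} : WF R Γ δ .unit
  | lam {R : Tm.RCtx} {Γ : VCtx} {δ x M} : Tm.fo x M = 1 →
      WF R (Function.update Γ x (some .ulam)) δ M → WF R Γ δ (.lam x M)
  | app {R : Tm.RCtx} {Γ : VCtx} {δ M N} :
      WF R Γ δ M → WF R Γ δ N → WF R Γ δ (.app M N)
  | bang {R : Tm.RCtx} {Γ Γ' : VCtx} {δ M} : Tm.foa M ≤ 1 →
      (∀ x, Γ' x = none ∨ Γ' x = some .ulam) →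
      (∀ x, Γ' x = some .ulam → Γ x = some .ubang) →
      WF R Γ' (δ + 1) M → WF R Γ δ (.bang M)
  | para {R : Tm.RCtx} {Γ Γ' : VCtx} {δ M} :
      (∀ x, Γ' x = none ∨ Γ' x = some .ulam) →
      (∀ x, Γ' x = some .ulam → Γ x = some .ubang ∨ Γ x = some .upara) →
      WF R Γ' (δ + 1) M → WF R Γ δ (.para M)
  | letB {R : Tm.RCtx} {Γ : VCtx} {δ x M N} : 1 ≤ Tm.fo x N →
      WF R Γ δ M → WF R (Function.update Γ x (some .ubang)) δ N →
      WF R Γ δ (.letB x M N)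
  | letP {R : Tm.RCtx} {Γ : VCtx} {δ x M N} : Tm.fo x N = 1 →
      WF R Γ δ M → WF R (Function.update Γ x (some .upara)) δ N →
      WF R Γ δ (.letP x M N)
  | get {R : Tm.RCtx} {Γ : VCtx} {δ r} : R r = δ → WF R Γ δ (.get r)
  | setr {R : Tm.RCtx} {Γ : VCtx} {δ r M} : R r = δ → WF R Γ δ M →
      WF R Γ δ (.setr r M)
  | store {R : Tm.RCtx} {Γ : VCtx} {r M} : WF R Γ (R r) M → WF R Γ 0 (.store r M)
  | par {R : Tm.RCtx} {Γ : VCtx} {δ P Q} :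
      WF R Γ δ P → WF R Γ δ Q → WF R Γ δ (.par P Q)

/-- One-hole evaluation contexts `E`. -/
inductive Ctx : Type
  | hole : Ctx
  | lam : ℕ → Ctx → Ctx
  | appL : Ctx → Tm → Ctx
  | appR : Tm → Ctx → Ctx
  | bang : Ctx → Ctx
  | para : Ctx → Ctx
  | letBL : ℕ → Ctx → Tm → Ctx
  | letBR : ℕ → Tm → Ctx → Ctx
  | letPL : ℕ → Ctx → Tm → Ctx
  | letPR : ℕ → Tm → Ctx → Ctx
  | setr : ℕ → Ctx → Ctx
  | store : ℕ → Ctx → Ctx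
  | parL : Ctx → Tm → Ctx
  | parR : Tm → Ctx → Ctx

namespace Ctx

def fill : Ctx → Tm → Tm
  | hole, M => M
  | lam x E, M => .lam x (fill E M)
  | appL E N, M => .app (fill E M) N
  | appR N E, M => .app N (fill E M)
  | bang E, M => .bang (fill E M)
  | para E, M => .para (fill E M)
  | letBL x E N, M => .letB x (fill E M) N
  | letBR x N E, M => .letB x N (fill E M)
  | letPL x E N, M => .letP x (fill E M) N
  | letPR x N E, M => .letP x N (fill E M)
  | setr r E, M => .setr r (fill E M)
  | store r E, M => .store r (fill E M)
  | parL E N, M => .par (fill E M) N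
  | parR N E, M => .par N (fill E M)

/-- Depth of the hole of a context. -/
def hdepth (R : Tm.RCtx) : Ctx → ℕ
  | hole => 0
  | lam _ E => hdepth R E
  | appL E _ => hdepth R E
  | appR _ E => hdepth R E
  | bang E => hdepth R E + 1
  | para E => hdepth R E + 1
  | letBL _ E _ => hdepth R E
  | letBR _ _ E => hdepth R E
  | letPL _ E _ => hdepth R E
  | letPR _ _ E => hdepth R E
  | setr _ E => hdepth R E
  | store r E => R r + hdepth R E
  | parL E _ => hdepth R E
  | parR _ E => hdepth R E

/-- Outer-bang contexts: contexts not decomposable as `E[!E']`. -/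
def isOB : Ctx → Prop
  | hole => True
  | lam _ E => isOB E
  | appL E _ => isOB E
  | appR _ E => isOB E
  | bang _ => False
  | para E => isOB E
  | letBL _ E _ => isOB E
  | letBR _ _ E => isOB E
  | letPL _ E _ => isOB E
  | letPR _ _ E => isOB E
  | setr _ E => isOB E
  | store _ E => isOB E
  | parL E _ => isOB E
  | parR _ E => isOB E

end Ctx

/-- Structural equivalence: commutativity/associativity of `∥`, closed
under arbitrary contexts. -/
inductive SEq : Tm → Tm → Prop
  | refl (M : Tm) : SEq M M
  | symm {P Q} : SEq P Q → SEq Q P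
  | trans {P Q S} : SEq P Q → SEq Q S → SEq P S
  | comm (P Q : Tm) : SEq (.par P Q) (.par Q P)
  | assoc (P Q S : Tm) : SEq (.par (.par P Q) S) (.par P (.par Q S))
  | ctx (E : Ctx) {P Q} : SEq P Q → SEq (E.fill P) (E.fill Q)

open Ctx in
/-- Reduction rules, indexed by the depth `i` at which the redex occurs. -/
inductive RedAt (R : Tm.RCtx) : ℕ → Tm → Tm → Prop
  | beta (E : Ctx) (x : ℕ) (M N : Tm) :
      RedAt R (E.hdepth R) (E.fill (.app (.lam x M) N)) (E.fill (Tm.subst N x M))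
  | lbang (E : Ctx) (x : ℕ) (M N : Tm) :
      RedAt R (E.hdepth R) (E.fill (.letB x (.bang N) M)) (E.fill (Tm.subst N x M))
  | lpara (E : Ctx) (x : ℕ) (M N : Tm) :
      RedAt R (E.hdepth R) (E.fill (.letP x (.para N) M)) (E.fill (Tm.subst N x M))
  | get (E : Ctx) (r : ℕ) (M : Tm) :
      RedAt R (E.hdepth R) (.par (E.fill (.get r)) (.store r M)) (E.fill M)
  | setr (E : Ctx) (r : ℕ) (M : Tm) : M.closed →
      RedAt R (E.hdepth R) (E.fill (.setr r M)) (.par (E.fill .unit) (.store r M))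
  | gc (E : Ctx) (M : Tm) :
      RedAt R (E.hdepth R) (E.fill (.par .unit M)) (E.fill M)

/-- A reduction step at depth `i`, modulo structural equivalence. -/
def StepAt (R : Tm.RCtx) (i : ℕ) (P Q : Tm) : Prop :=
  ∃ P' Q', SEq P P' ∧ RedAt R i P' Q' ∧ SEq Q' Q

/-- A reduction step of the largest reduction relation `⟶`. -/
def Step (P Q : Tm) : Prop := ∃ i, StepAt (fun _ => 0) i P Q

open Ctx in
/-- Outer-bang reduction rules, indexed by depth. -/
inductive RedFAt (R : Tm.RCtx) : ℕ → Tm → Tm → Prop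
  | beta (E : Ctx) (x : ℕ) (M N : Tm) : E.isOB →
      RedFAt R (E.hdepth R) (E.fill (.app (.lam x M) N)) (E.fill (Tm.subst N x M))
  | lbang (E : Ctx) (x : ℕ) (M N : Tm) : E.isOB →
      RedFAt R (E.hdepth R) (E.fill (.letB x (.bang N) M)) (E.fill (Tm.subst N x M))
  | lpara (E : Ctx) (x : ℕ) (M N : Tm) : E.isOB →
      RedFAt R (E.hdepth R) (E.fill (.letP x (.para N) M)) (E.fill (Tm.subst N x M))
  | get (E : Ctx) (r : ℕ) (M : Tm) : E.isOB →
      RedFAt R (E.hdepth R) (.par (E.fill (.get r)) (.store r M)) (E.fill M)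
  | setr (E : Ctx) (r : ℕ) (M : Tm) : E.isOB → M.closed →
      RedFAt R (E.hdepth R) (E.fill (.setr r M)) (.par (E.fill .unit) (.store r M))
  | gc (E : Ctx) (M : Tm) : E.isOB →
      RedFAt R (E.hdepth R) (E.fill (.par .unit M)) (E.fill M)

/-- An outer-bang reduction step at depth `i`, modulo structural equivalence. -/
def StepFAt (R : Tm.RCtx) (i : ℕ) (P Q : Tm) : Prop :=
  ∃ P' Q', SEq P P' ∧ RedFAt R i P' Q' ∧ SEq Q' Q

/-- Values of the call-by-value calculus. -/
inductive IsVal : Tm → Prop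
  | var (x : ℕ) : IsVal (.var x)
  | reg (r : ℕ) : IsVal (.reg r)
  | unit : IsVal .unit
  | lam (x : ℕ) (M : Tm) : IsVal (.lam x M)
  | bang {V} : IsVal V → IsVal (.bang V)
  | para {V} : IsVal V → IsVal (.para V)

/-- Call-by-value programs: `!M` only on values, stores hold values. -/
inductive CbvTm : Tm → Prop
  | var (x : ℕ) : CbvTm (.var x)
  | reg (r : ℕ) : CbvTm (.reg r)
  | unit : CbvTm .unit
  | lam {x M} : CbvTm M → CbvTm (.lam x M)
  | app {M N} : CbvTm M → CbvTm N → CbvTm (.app M N)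
  | bang {M} : IsVal M → CbvTm M → CbvTm (.bang M)
  | para {M} : CbvTm M → CbvTm (.para M)
  | letB {x M N} : CbvTm M → CbvTm N → CbvTm (.letB x M N)
  | letP {x M N} : CbvTm M → CbvTm N → CbvTm (.letP x M N)
  | get (r : ℕ) : CbvTm (.get r)
  | setr {r M} : CbvTm M → CbvTm (.setr r M)
  | store {r M} : IsVal M → CbvTm M → CbvTm (.store r M)
  | par {P Q} : CbvTm P → CbvTm Q → CbvTm (.par P Q)

/-- Left-to-right call-by-value evaluation contexts `F_v`. -/
inductive CbvCtx : Ctx → Prop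
  | hole : CbvCtx .hole
  | appL {E} (M : Tm) : CbvCtx E → CbvCtx (.appL E M)
  | appR {V E} : IsVal V → CbvCtx E → CbvCtx (.appR V E)
  | para {E} : CbvCtx E → CbvCtx (.para E)
  | letBL {E} (x : ℕ) (M : Tm) : CbvCtx E → CbvCtx (.letBL x E M)
  | letPL {E} (x : ℕ) (M : Tm) : CbvCtx E → CbvCtx (.letPL x E M)
  | setr {E} (r : ℕ) : CbvCtx E → CbvCtx (.setr r E)
  | parL {E} (P : Tm) : CbvCtx E → CbvCtx (.parL E P)
  | parR {E} (P : Tm) : CbvCtx E → CbvCtx (.parR P E)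

open Ctx in
/-- Call-by-value reduction rules. -/
inductive CbvRed : Tm → Tm → Prop
  | beta {E : Ctx} (x : ℕ) (M : Tm) {V : Tm} : CbvCtx E → IsVal V →
      CbvRed (E.fill (.app (.lam x M) V)) (E.fill (Tm.subst V x M))
  | lbang {E : Ctx} (x : ℕ) (M : Tm) {V : Tm} : CbvCtx E → IsVal V →
      CbvRed (E.fill (.letB x (.bang V) M)) (E.fill (Tm.subst V x M))
  | lpara {E : Ctx} (x : ℕ) (M : Tm) {V : Tm} : CbvCtx E → IsVal V →
      CbvRed (E.fill (.letP x (.para V) M)) (E.fill (Tm.subst V x M))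
  | get {E : Ctx} (r : ℕ) {V : Tm} : CbvCtx E → IsVal V →
      CbvRed (.par (E.fill (.get r)) (.store r V)) (E.fill V)
  | setr {E : Ctx} (r : ℕ) {V : Tm} : CbvCtx E → IsVal V →
      CbvRed (E.fill (.setr r V)) (.par (E.fill .unit) (.store r V))
  | gc {E : Ctx} (M : Tm) : CbvCtx E →
      CbvRed (E.fill (.par .unit M)) (E.fill M)

/-- A call-by-value reduction step, modulo structural equivalence. -/
def CbvStep (P Q : Tm) : Prop :=
  ∃ P' Q', SEq P P' ∧ CbvRed P' Q' ∧ SEq Q' Q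

/-- `rep M k` is the iterated application `M M ⋯ M` (`k` copies, `k ≥ 1`). -/
def rep (M : Tm) : ℕ → Tm
  | 0 => M
  | 1 => M
  | (k + 2) => .app (rep M (k + 1)) M

/-- The unfolding `⟨P⟩ᵢ` of a program `P` at depth `i`. -/
def unfold : ℕ → Tm → Tm
  | _, .var x => .var x
  | _, .reg r => .reg r
  | _, .unit => .unit
  | i, .lam x M => .lam x (unfold i M)
  | i, .app M N => .app (unfold i M) (unfold i N)
  | 0, .bang M => .bang M
  | (i + 1), .bang M => .bang (unfold i M)
  | 0, .para M => .para M
  | (i + 1), .para M => .para (unfold i M)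
  | 0, .letB x (.bang M') N =>
      .letB x (rep (.bang M') (Tm.fo x (unfold 0 N))) (unfold 0 N)
  | 0, .letB x (.var y) N => .letB x (.var y) (unfold 0 N)
  | 0, .letB x (.reg r) N => .letB x (.reg r) (unfold 0 N)
  | 0, .letB x .unit N => .letB x .unit (unfold 0 N)
  | 0, .letB x (.lam y M) N => .letB x (unfold 0 (Tm.lam y M)) (unfold 0 N)
  | 0, .letB x (.app M M') N => .letB x (unfold 0 (Tm.app M M')) (unfold 0 N)
  | 0, .letB x (.para M) N => .letB x (unfold 0 (Tm.para M)) (unfold 0 N)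
  | 0, .letB x (.letB y M M') N => .letB x (unfold 0 (Tm.letB y M M')) (unfold 0 N)
  | 0, .letB x (.letP y M M') N => .letB x (unfold 0 (Tm.letP y M M')) (unfold 0 N)
  | 0, .letB x (.get r) N => .letB x (.get r) (unfold 0 N)
  | 0, .letB x (.setr r M) N => .letB x (unfold 0 (Tm.setr r M)) (unfold 0 N)
  | 0, .letB x (.store r M) N => .letB x (unfold 0 (Tm.store r M)) (unfold 0 N)
  | 0, .letB x (.par M M') N => .letB x (unfold 0 (Tm.par M M')) (unfold 0 N)
  | (i + 1), .letB x M N => .letB x (unfold (i + 1) M) (unfold (i + 1) N)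
  | i, .letP x M N => .letP x (unfold i M) (unfold i N)
  | _, .get r => .get r
  | i, .setr r M => .setr r (unfold i M)
  | i, .store r M => .store r (unfold i M)
  | i, .par P Q => .par (unfold i P) (unfold i Q)

/-- Types of the polynomial type system. -/
inductive Ty : Type
  | tvar : ℕ → Ty
  | beh : Ty
  | unit : Ty
  | arr : Ty → Ty → Ty
  | bang : Ty → Ty
  | para : Ty → Ty
  | all : ℕ → Ty → Ty
  | regT : ℕ → Ty → Ty
  deriving DecidableEq

/-- Free occurrence of a type variable in a type. -/
def occursT (t : ℕ) : Ty → Prop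
  | .tvar s => s = t
  | .beh => False
  | .unit => False
  | .arr A α => occursT t A ∨ occursT t α
  | .bang A => occursT t A
  | .para A => occursT t A
  | .all s A => s ≠ t ∧ occursT t A
  | .regT _ A => occursT t A

/-- Substitution of type `B` for type variable `t`. -/
def tsubst (B : Ty) (t : ℕ) : Ty → Ty
  | .tvar s => if s = t then B else .tvar s
  | .beh => .beh
  | .unit => .unit
  | .arr A α => .arr (tsubst B t A) (tsubst B t α)
  | .bang A => .bang (tsubst B t A)
  | .para A => .para (tsubst B t A)
  | .all s A => if s = t then .all s A else .all s (tsubst B t A)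
  | .regT r A => .regT r (tsubst B t A)

/-- Typed region contexts: each region gets a depth and a type. -/
abbrev TRCtx := ℕ → ℕ × Ty

/-- Compatibility `R ↓ α` of a region context and a type. -/
inductive TyDown (RT : TRCtx) : Ty → Prop
  | tvar (t : ℕ) : TyDown RT (.tvar t)
  | beh : TyDown RT .beh
  | unit : TyDown RT .unit
  | arr {A α} : TyDown RT A → TyDown RT α → TyDown RT (.arr A α)
  | bang {A} : TyDown RT A → TyDown RT (.bang A)
  | para {A} : TyDown RT A → TyDown RT (.para A)
  | all {t A} : TyDown RT A → (∀ r, ¬ occursT t (RT r).2) → TyDown RT (.all t A)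
  | regT (r : ℕ) : TyDown RT (.regT r (RT r).2)

/-- Well-formedness `R ⊢ α` of a type in a region context. -/
def TyWF (RT : TRCtx) (α : Ty) : Prop :=
  (∀ r, TyDown RT (RT r).2) ∧ TyDown RT α

/-- Typed variable contexts. -/
abbrev TCtx := ℕ → Option (Usage × Ty)

/-- Well-formedness `R ⊢ Γ` of a variable context. -/
def CtxTyWF (RT : TRCtx) (Γ : TCtx) : Prop :=
  (∀ r, TyDown RT (RT r).2) ∧ ∀ x u A, Γ x = some (u, A) → TyDown RT A

/-- Stores: parallel compositions of assignments. -/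
inductive IsStore : Tm → Prop
  | store (r : ℕ) (M : Tm) : IsStore (.store r M)
  | par {S S'} : IsStore S → IsStore S' → IsStore (.par S S')

/-- The polynomial type system: `Typed RT Γ δ P α` is `R; Γ ⊢^δ P : α`. -/
inductive Typed (RT : TRCtx) : TCtx → ℕ → Tm → Ty → Prop
  | var {Γ δ x A} : CtxTyWF RT Γ → Γ x = some (.ulam, A) → Typed RT Γ δ (.var x) A
  | unit {Γ δ} : CtxTyWF RT Γ → Typed RT Γ δ .unit .unit
  | reg {Γ δ r} : CtxTyWF RT Γ → Typed RT Γ δ (.reg r) (.regT r (RT r).2)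
  | lam {Γ δ x M A α} : Tm.fo x M = 1 →
      Typed RT (Function.update Γ x (some (.ulam, A))) δ M α →
      Typed RT Γ δ (.lam x M) (.arr A α)
  | app {Γ δ M N A α} : Typed RT Γ δ M (.arr A α) → Typed RT Γ δ N A →
      Typed RT Γ δ (.app M N) α
  | bang {Γ Γ' δ M A} : Tm.foa M ≤ 1 →
      (∀ x, Γ' x = none ∨ ∃ B, Γ' x = some (.ulam, B)) →
      (∀ x B, Γ' x = some (Usage.ulam, B) → Γ x = some (.ubang, B)) →
      Typed RT Γ' (δ + 1) M A → Typed RT Γ δ (.bang M) (.bang A)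
  | para {Γ Γ' δ M A} :
      (∀ x, Γ' x = none ∨ ∃ B, Γ' x = some (.ulam, B)) →
      (∀ x B, Γ' x = some (Usage.ulam, B) →
        Γ x = some (.ubang, B) ∨ Γ x = some (.upara, B)) →
      Typed RT Γ' (δ + 1) M A → Typed RT Γ δ (.para M) (.para A)
  | letB {Γ δ x M N A α} : 1 ≤ Tm.fo x N →
      Typed RT Γ δ M (.bang A) →
      Typed RT (Function.update Γ x (some (.ubang, A))) δ N α →
      Typed RT Γ δ (.letB x M N) α
  | letP {Γ δ x M N A α} : Tm.fo x N = 1 →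
      Typed RT Γ δ M (.para A) →
      Typed RT (Function.update Γ x (some (.upara, A))) δ N α →
      Typed RT Γ δ (.letP x M N) α
  | gen {Γ δ M t A} :
      (∀ r, ¬ occursT t (RT r).2) →
      (∀ x u A', Γ x = some (u, A') → ¬ occursT t A') →
      Typed RT Γ δ M A → Typed RT Γ δ M (.all t A)
  | inst {Γ δ M t A B} : Typed RT Γ δ M (.all t A) → TyDown RT B →
      Typed RT Γ δ M (tsubst B t A)
  | get {Γ δ r} : CtxTyWF RT Γ → (RT r).1 = δ → Typed RT Γ δ (.get r) (RT r).2
  | setr {Γ δ r M} : (RT r).1 = δ → Typed RT Γ δ M (RT r).2 →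
      Typed RT Γ δ (.setr r M) .unit
  | store {Γ r M} : Typed RT Γ (RT r).1 M (RT r).2 → Typed RT Γ 0 (.store r M) .beh
  | parLunit {Γ δ P₁ P₂ α} : Typed RT Γ δ P₁ .unit →
      Typed RT Γ δ P₂ α → Typed RT Γ δ (.par P₁ P₂) α
  | parLstore {Γ δ P₁ P₂ α} : IsStore P₁ →
      Typed RT Γ δ P₂ α → Typed RT Γ δ (.par P₁ P₂) α
  | parRunit {Γ δ P₁ P₂ α} : Typed RT Γ δ P₂ .unit →
      Typed RT Γ δ P₁ α → Typed RT Γ δ (.par P₁ P₂) α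
  | parRstore {Γ δ P₁ P₂ α} : IsStore P₂ →
      Typed RT Γ δ P₁ α → Typed RT Γ δ (.par P₁ P₂) α
  | parB {Γ δ P₁ P₂ α₁ α₂} : Typed RT Γ δ P₁ α₁ → Typed RT Γ δ P₂ α₂ →
      Typed RT Γ δ (.par P₁ P₂) .beh

/-- The term `Z = λx. let !x = x in !(x x)`. -/
def Zterm : Tm := .lam 0 (.letB 0 (.var 0) (.bang (.app (.var 0) (.var 0))))

/-- `Zchain n = Z (Z (… (Z !y)…))` with `n` occurrences of `Z` (here `y` is
the free variable `1`). -/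
def Zchain : ℕ → Tm
  | 0 => .bang (.var 1)
  | n + 1 => .app Zterm (Zchain n)

/-- `dup n` is the term `y y ⋯ y` with `2 ^ n` occurrences of `y`. -/
def dup : ℕ → Tm
  | 0 => .var 1
  | n + 1 => .app (dup n) (dup n)

namespace Ctx

/-- Plug the second context into the hole of the first. -/
def comp : Ctx → Ctx → Ctx
  | hole, E' => E'
  | lam x E, E' => lam x (comp E E')
  | appL E N, E' => appL (comp E E') N
  | appR N E, E' => appR N (comp E E')
  | bang E, E' => bang (comp E E')
  | para E, E' => para (comp E E')
  | letBL x E N, E' => letBL x (comp E E') N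
  | letBR x N E, E' => letBR x N (comp E E')
  | letPL x E N, E' => letPL x (comp E E') N
  | letPR x N E, E' => letPR x N (comp E E')
  | setr r E, E' => setr r (comp E E')
  | store r E, E' => store r (comp E E')
  | parL E N, E' => parL (comp E E') N
  | parR N E, E' => parR N (comp E E')

lemma fill_comp (E E' : Ctx) (M : Tm) :
    (E.comp E').fill M = E.fill (E'.fill M) := by
  induction E <;> simp [comp, fill, *]

end Ctx

lemma step_of_redAt {P Q : Tm} (i : ℕ) (h : RedAt (fun _ => 0) i P Q) : Step P Q :=
  ⟨i, P, Q, SEq.refl P, h, SEq.refl Q⟩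

lemma Zchain_reduces (n : ℕ) (E : Ctx) :
    Relation.ReflTransGen Step (E.fill (Zchain n)) (E.fill (.bang (dup n))) := by
  induction n generalizing E with
  | zero => exact Relation.ReflTransGen.refl
  | succ n ih =>
    have h1 : Relation.ReflTransGen Step (E.fill (Zchain (n + 1)))
        (E.fill (.app Zterm (.bang (dup n)))) := by
      have := ih (E.comp (Ctx.appR Zterm Ctx.hole))
      simpa [Ctx.fill_comp, Ctx.fill, Zchain] using this
    have h2 : Step (E.fill (.app Zterm (.bang (dup n))))
        (E.fill (.letB 0 (.bang (dup n)) (.bang (.app (.var 0) (.var 0))))) := by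
      have := step_of_redAt _
        (RedAt.beta (R := fun _ => 0) E 0
          (.letB 0 (.var 0) (.bang (.app (.var 0) (.var 0)))) (.bang (dup n)))
      simpa [Zterm, Tm.subst] using this
    have h3 : Step (E.fill (.letB 0 (.bang (dup n)) (.bang (.app (.var 0) (.var 0)))))
        (E.fill (.bang (dup (n + 1)))) := by
      have := step_of_redAt _
        (RedAt.lbang (R := fun _ => 0) E 0 (.bang (.app (.var 0) (.var 0))) (dup n))
      simpa [Tm.subst, dup] using this
    exact (h1.tail h2).tail h3

/-- Exponential blowup of `Z`: `Z^n(!y)` reduces to `!(y y ⋯ y)` with `2 ^ n`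
occurrences of `y`; in particular the size of the normal form is at least
`2 ^ n`. -/
theorem Z_exponential_blowup (n : ℕ) :
    Relation.ReflTransGen Step (Zchain n) (.bang (dup n)) ∧
      Tm.fo 1 (dup n) = 2 ^ n ∧ 2 ^ n ≤ (dup n).sizeM := by
  refine ⟨by simpa [Ctx.fill] using Zchain_reduces n Ctx.hole, ?_, ?_⟩
  · induction n with
    | zero => simp [dup, Tm.fo]
    | succ n ih => simp [dup, Tm.fo, ih, pow_succ]; ring
  · induction n with
    | zero => simp [dup, Tm.sizeM]
    | succ n ih =>
      have : 2 ^ (n + 1) ≤ (dup n).sizeM + (dup n).sizeM := by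
        rw [pow_succ]; omega
      simpa [dup, Tm.sizeM] using this.trans (by omega)
end
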